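/- Let μ be a radially symmetric probability measure supported on the unit disk whose radial density f_R on {1-ε ≤ |z| ≤ 1} satisfies f_R(r) ≤ C_μ(1-r)^α with α ≥ 0, and let X ∼ μ. Then there is a constant C > 0 (depending on μ, α, ε) such that for all 0 ≤ p < 2, sup_{1-ε/2 ≤ |z| ≤ 1} E|z - X|^{-p} ≤ C/(2 - p), and for all 0 ≤ p < 2 + α, sup_{|z| = 1} E|z - X|^{-p} ≤ C/((α+2) - p). -/

import Mathlib

open MeasureTheory Set Metric
open scoped ENNReal NNReal

lemma aux_setLIntegral_le {s : Set ℂ} (hs : MeasurableSet s) {f : ℂ → ℝ} {B : ℝ}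
    (hbd : ∀ x ∈ s, f x ≤ B) :
    ∫⁻ x in s, ENNReal.ofReal (f x) ≤ ENNReal.ofReal B * volume s := by
  calc ∫⁻ x in s, ENNReal.ofReal (f x)
      ≤ ∫⁻ _ in s, ENNReal.ofReal B := by
        refine lintegral_mono_ae ?_
        filter_upwards [ae_restrict_mem hs] with x hx
        exact ENNReal.ofReal_le_ofReal (hbd x hx)
    _ = ENNReal.ofReal B * volume s := by rw [setLIntegral_const]

lemma aux_ball_bound (μ : Measure ℂ) {S : Set ℂ} (hS : MeasurableSet S)
    {f : ℂ → ℝ} (hdens : μ.restrict S =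
      (volume.restrict S).withDensity (fun z => ENNReal.ofReal (f z)))
    {B : ℝ} (hB : 0 ≤ B) (z : ℂ) (ρ : ℝ) (hρ : 0 ≤ ρ)
    (hbd : ∀ x ∈ Metric.ball z ρ ∩ S, f x ≤ B) :
    (μ.restrict S) (Metric.ball z ρ) ≤ ENNReal.ofReal (B * (ρ ^ 2 * Real.pi)) := by
  rw [hdens, withDensity_apply _ measurableSet_ball,
    Measure.restrict_restrict measurableSet_ball]
  calc ∫⁻ x in Metric.ball z ρ ∩ S, ENNReal.ofReal (f x)
      ≤ ENNReal.ofReal B * volume (Metric.ball z ρ ∩ S) :=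
        aux_setLIntegral_le (measurableSet_ball.inter hS) hbd
    _ ≤ ENNReal.ofReal B * volume (Metric.ball z ρ) :=
        mul_le_mul_right (measure_mono inter_subset_left) _
    _ = ENNReal.ofReal (B * (ρ ^ 2 * Real.pi)) := by
        rw [Complex.volume_ball]
        have hπ : (NNReal.pi : ℝ≥0∞) = ENNReal.ofReal Real.pi := by
          rw [← NNReal.coe_real_pi, ENNReal.ofReal_coe_nnreal]
        rw [hπ, ← ENNReal.ofReal_pow hρ, ← ENNReal.ofReal_mul (pow_nonneg hρ 2),
          ← ENNReal.ofReal_mul hB]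

lemma aux_layercake (ν : Measure ℂ) (hν : ν Set.univ ≤ 1) (z : ℂ) {K β p : ℝ}
    (hK : 0 ≤ K) (hp : 0 < p) (hβ : p < β)
    (hball : ∀ ρ : ℝ, 0 < ρ → ν (Metric.ball z ρ) ≤ ENNReal.ofReal (K * ρ ^ β)) :
    ∫⁻ x, ENNReal.ofReal (‖z - x‖ ^ (-p)) ∂ν ≤ ENNReal.ofReal (1 + K * (p / (β - p))) := by
  have hβ0 : 0 < β := hp.trans hβ
  have hmeas : Measurable fun x : ℂ => ‖z - x‖ ^ (-p) :=
    ((measurable_const.sub measurable_id).norm.pow measurable_const)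
  have hnn : (0 : ℂ → ℝ) ≤ᵐ[ν] fun x => ‖z - x‖ ^ (-p) :=
    Filter.Eventually.of_forall fun x => Real.rpow_nonneg (norm_nonneg _) _
  rw [lintegral_eq_lintegral_meas_lt ν hnn hmeas.aemeasurable]
  have hsplit : Ioi (0:ℝ) = Ioc 0 1 ∪ Ioi 1 := (Ioc_union_Ioi_eq_Ioi zero_le_one).symm
  rw [hsplit]
  refine le_trans (lintegral_union_le _ _ _) ?_
  have he : -(1/p) * β < -1 := by
    rw [neg_mul, neg_lt_neg_iff]
    rw [one_div, inv_mul_eq_div, lt_div_iff₀ hp]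
    linarith
  have h1 : ∫⁻ t in Ioc (0:ℝ) 1, ν {a : ℂ | t < ‖z - a‖ ^ (-p)} ≤ 1 := by
    calc ∫⁻ t in Ioc (0:ℝ) 1, ν {a : ℂ | t < ‖z - a‖ ^ (-p)}
        ≤ ∫⁻ _ in Ioc (0:ℝ) 1, 1 :=
          lintegral_mono fun t => le_trans (measure_mono (subset_univ _)) hν
      _ = 1 := by simp
  have h2 : ∫⁻ t in Ioi (1:ℝ), ν {a : ℂ | t < ‖z - a‖ ^ (-p)}
      ≤ ENNReal.ofReal (K * (p / (β - p))) := by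
    have hb : ∀ t : ℝ, t ∈ Ioi (1:ℝ) →
        ν {a : ℂ | t < ‖z - a‖ ^ (-p)} ≤ ENNReal.ofReal (K * t ^ (-(1/p) * β)) := by
      intro t ht
      have ht0 : (0:ℝ) < t := lt_trans one_pos ht
      have hρ : (0:ℝ) < t ^ (-(1/p)) := Real.rpow_pos_of_pos ht0 _
      have hsub : {a : ℂ | t < ‖z - a‖ ^ (-p)} ⊆ Metric.ball z (t ^ (-(1/p))) := by
        intro a ha
        simp only [mem_setOf_eq] at ha
        have hr0 : 0 < ‖z - a‖ := by
          rcases eq_or_lt_of_le (norm_nonneg (z - a)) with h | h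
          · exfalso
            rw [← h, Real.zero_rpow (by simpa using hp.ne')] at ha
            exact absurd ha (by linarith)
          · exact h
        have := Real.rpow_lt_rpow_of_neg ht0 ha (by simp [hp] : -(1/p) < 0)
        rw [← Real.rpow_mul hr0.le] at this
        have hexp : -p * -(1/p) = 1 := by field_simp
        rw [hexp, Real.rpow_one] at this
        rw [mem_ball, dist_eq_norm, ← norm_neg, neg_sub]
        exact this
      calc ν {a : ℂ | t < ‖z - a‖ ^ (-p)} ≤ ν (Metric.ball z (t ^ (-(1/p)))) :=
            measure_mono hsub
        _ ≤ ENNReal.ofReal (K * (t ^ (-(1/p))) ^ β) := hball _ hρ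
        _ = ENNReal.ofReal (K * t ^ (-(1/p) * β)) := by rw [← Real.rpow_mul ht0.le]
    calc ∫⁻ t in Ioi (1:ℝ), ν {a : ℂ | t < ‖z - a‖ ^ (-p)}
        ≤ ∫⁻ t in Ioi (1:ℝ), ENNReal.ofReal (K * t ^ (-(1/p) * β)) := by
          refine lintegral_mono_ae ?_
          filter_upwards [ae_restrict_mem measurableSet_Ioi] with t ht
          exact hb t ht
      _ = ENNReal.ofReal (∫ t in Ioi (1:ℝ), K * t ^ (-(1/p) * β)) := by
          rw [← ofReal_integral_eq_lintegral_ofReal]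
          · exact ((integrableOn_Ioi_rpow_of_lt he one_pos).const_mul K)
          · filter_upwards [ae_restrict_mem measurableSet_Ioi] with t ht
            have : (0:ℝ) < t := lt_trans one_pos ht
            positivity
      _ = ENNReal.ofReal (K * (p / (β - p))) := by
          congr 1
          rw [integral_const_mul K, integral_Ioi_rpow_of_lt he one_pos,
            Real.one_rpow]
          have h1 : -(1/p) * β + 1 ≠ 0 := by
            intro h
            have : β = p := by field_simp at h; linarith
            linarith
          field_simp
          rw [show -β + p = -(β - p) by ring]
          rw [div_neg, neg_neg]
  calc _ ≤ 1 + ENNReal.ofReal (K * (p / (β - p))) := add_le_add h1 h2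
    _ = ENNReal.ofReal (1 + K * (p / (β - p))) := by
        rw [ENNReal.ofReal_add (by norm_num)
          (mul_nonneg hK (div_nonneg hp.le (by linarith))), ENNReal.ofReal_one]

theorem inverse_distance_moments_nonneg_alpha (μ : Measure ℂ) [IsProbabilityMeasure μ]
    (ε α Cμ : ℝ) (hε : 0 < ε) (hε1 : ε < 1) (hα : 0 ≤ α) (hC : 0 < Cμ)
    (hsupp : μ {z : ℂ | 1 < ‖z‖} = 0)
    (hsym : ∀ θ : ℝ, μ.map (fun z => Complex.exp (θ * Complex.I) * z) = μ)
    (f : ℂ → ℝ)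
    (hdens : μ.restrict {z : ℂ | 1 - ε ≤ ‖z‖ ∧ ‖z‖ ≤ 1} =
      (volume.restrict {z : ℂ | 1 - ε ≤ ‖z‖ ∧ ‖z‖ ≤ 1}).withDensity
        (fun z => ENNReal.ofReal (f z)))
    (hf : ∀ z : ℂ, 1 - ε ≤ ‖z‖ → ‖z‖ ≤ 1 →
      f z ≤ Cμ * (1 - ‖z‖) ^ α / (2 * Real.pi * ‖z‖)) :
    ∃ C > (0 : ℝ),
      (∀ p : ℝ, 0 ≤ p → p < 2 → ∀ z : ℂ, 1 - ε / 2 ≤ ‖z‖ → ‖z‖ ≤ 1 →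
        (∫ x, ‖z - x‖ ^ (-p) ∂μ) ≤ C / (2 - p)) ∧
      (∀ p : ℝ, 0 ≤ p → p < 2 + α → ∀ z : ℂ, ‖z‖ = 1 →
        (∫ x, ‖z - x‖ ^ (-p) ∂μ) ≤ C / ((α + 2) - p)) := by
  have hπ : (0:ℝ) < Real.pi := Real.pi_pos
  have h1ε : (0:ℝ) < 1 - ε := by linarith
  set S : Set ℂ := {z : ℂ | 1 - ε ≤ ‖z‖ ∧ ‖z‖ ≤ 1} with hSdef
  have hS : MeasurableSet S :=
    (measurableSet_le measurable_const measurable_norm).inter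
      (measurableSet_le measurable_norm measurable_const)
  set K : ℝ := Cμ / (2 * (1 - ε)) with hKdef
  have hK0 : 0 < K := by positivity
  set M : ℝ := (2/ε) ^ (2 + α) with hMdef
  have hM0 : 0 < M := Real.rpow_pos_of_pos (by positivity) _
  set C : ℝ := (α + 2) * (2 + K + M) with hCdef
  have hC0 : 0 < C := by positivity
  have hνle : μ.restrict S Set.univ ≤ 1 := by
    rw [Measure.restrict_apply_univ]; exact prob_le_one
  have hae1 : ∀ᵐ x ∂μ, ‖x‖ ≤ 1 := by
    rw [ae_iff]; simpa [not_le] using hsupp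
  -- outer bound
  have houter : ∀ z : ℂ, 1 - ε/2 ≤ ‖z‖ → ∀ p : ℝ, 0 ≤ p → p ≤ 2 + α →
      ∫⁻ x, ENNReal.ofReal (‖z - x‖ ^ (-p)) ∂(μ.restrict Sᶜ) ≤ ENNReal.ofReal M := by
    intro z hz p hp0 hpa
    have hae : ∀ᵐ x ∂(μ.restrict Sᶜ),
        ENNReal.ofReal (‖z - x‖ ^ (-p)) ≤ ENNReal.ofReal M := by
      filter_upwards [ae_restrict_mem hS.compl, ae_restrict_of_ae hae1] with x hx hx1
      have hxε : ‖x‖ < 1 - ε := by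
        by_contra h
        exact hx ⟨le_of_not_gt h, hx1⟩
      have hd : ε / 2 ≤ ‖z - x‖ := by
        have := norm_sub_norm_le z x
        linarith
      have h2 : ‖z - x‖ ^ (-p) ≤ (ε/2) ^ (-p) :=
        Real.rpow_le_rpow_of_nonpos (by positivity) hd (neg_nonpos.mpr hp0)
      have h3 : (ε/2 : ℝ) ^ (-p) = (2/ε) ^ p := by
        rw [Real.rpow_neg (by positivity), ← Real.inv_rpow (by positivity), inv_div]
      have h4 : (2/ε : ℝ) ^ p ≤ M := by
        rw [hMdef]
        exact Real.rpow_le_rpow_of_exponent_le (by rw [le_div_iff₀ hε]; linarith) hpa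
      exact ENNReal.ofReal_le_ofReal (h2.trans ((le_of_eq h3).trans h4))
    calc ∫⁻ x, ENNReal.ofReal (‖z - x‖ ^ (-p)) ∂(μ.restrict Sᶜ)
        ≤ ∫⁻ _, ENNReal.ofReal M ∂(μ.restrict Sᶜ) := lintegral_mono_ae hae
      _ = ENNReal.ofReal M * (μ.restrict Sᶜ Set.univ) := lintegral_const _
      _ ≤ ENNReal.ofReal M * 1 := mul_le_mul_right
          (by rw [Measure.restrict_apply_univ]; exact prob_le_one) _
      _ = ENNReal.ofReal M := mul_one _
  -- ball bound on the annulus, general z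
  have hball1 : ∀ z : ℂ, ∀ ρ : ℝ, 0 < ρ →
      (μ.restrict S) (Metric.ball z ρ) ≤ ENNReal.ofReal (K * ρ ^ (2:ℝ)) := by
    intro z ρ hρ
    have hbd : ∀ x ∈ Metric.ball z ρ ∩ S, f x ≤ Cμ / (2 * Real.pi * (1 - ε)) := by
      rintro x ⟨-, hx1, hx2⟩
      have hx0 : (0:ℝ) < ‖x‖ := lt_of_lt_of_le h1ε hx1
      calc f x ≤ Cμ * (1 - ‖x‖) ^ α / (2 * Real.pi * ‖x‖) := hf x hx1 hx2
        _ ≤ Cμ / (2 * Real.pi * (1 - ε)) := by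
          apply div_le_div₀ hC.le ?_ (by positivity) (by nlinarith)
          calc Cμ * (1 - ‖x‖) ^ α ≤ Cμ * 1 :=
              mul_le_mul_of_nonneg_left
                (Real.rpow_le_one (by linarith) (by linarith) hα) hC.le
            _ = Cμ := mul_one _
    refine le_trans (aux_ball_bound μ hS hdens (by positivity) z ρ hρ.le hbd)
      (le_of_eq ?_)
    congr 1
    rw [Real.rpow_two, hKdef]
    field_simp
  -- ball bound for z on the circle
  have hball2 : ∀ z : ℂ, ‖z‖ = 1 → ∀ ρ : ℝ, 0 < ρ →
      (μ.restrict S) (Metric.ball z ρ) ≤ ENNReal.ofReal (K * ρ ^ (2 + α)) := by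
    intro z hz ρ hρ
    have hbd : ∀ x ∈ Metric.ball z ρ ∩ S,
        f x ≤ Cμ * ρ ^ α / (2 * Real.pi * (1 - ε)) := by
      rintro x ⟨hxb, hx1, hx2⟩
      have hx0 : (0:ℝ) < ‖x‖ := lt_of_lt_of_le h1ε hx1
      have hdist : 1 - ‖x‖ < ρ := by
        have h1 : ‖z‖ - ‖x‖ ≤ ‖z - x‖ := norm_sub_norm_le z x
        have h2 : ‖z - x‖ < ρ := by
          rw [norm_sub_rev]
          rwa [mem_ball, dist_eq_norm] at hxb
        rw [hz] at h1
        linarith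
      calc f x ≤ Cμ * (1 - ‖x‖) ^ α / (2 * Real.pi * ‖x‖) := hf x hx1 hx2
        _ ≤ Cμ * ρ ^ α / (2 * Real.pi * (1 - ε)) := by
          apply div_le_div₀ (by positivity) ?_ (by positivity) (by nlinarith)
          exact mul_le_mul_of_nonneg_left
            (Real.rpow_le_rpow (by linarith) hdist.le hα) hC.le
    refine le_trans (aux_ball_bound μ hS hdens (by positivity) z ρ hρ.le hbd)
      (le_of_eq ?_)
    congr 1
    rw [Real.rpow_add hρ, Real.rpow_two, hKdef]
    field_simp
  refine ⟨C, hC0, ?_, ?_⟩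
  · -- annulus case
    intro p hp0 hp2 z hz1 hz2
    rcases eq_or_lt_of_le hp0 with hp | hp
    · simp only [← hp, neg_zero, Real.rpow_zero, integral_const, measure_univ,
        ENNReal.toReal_one, probReal_univ, smul_eq_mul, one_mul]
      rw [le_div_iff₀ (by linarith)]
      nlinarith [hK0, hM0, hα, mul_nonneg hα (by positivity : (0:ℝ) ≤ 2 + K + M)]
    · have hq : (0:ℝ) < 2 - p := by linarith
      have key : ∫⁻ x, ENNReal.ofReal (‖z - x‖ ^ (-p)) ∂μ
          ≤ ENNReal.ofReal (C / (2 - p)) := by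
        have hdecomp : ∫⁻ x, ENNReal.ofReal (‖z - x‖ ^ (-p)) ∂μ
            = (∫⁻ x, ENNReal.ofReal (‖z - x‖ ^ (-p)) ∂(μ.restrict S))
              + ∫⁻ x, ENNReal.ofReal (‖z - x‖ ^ (-p)) ∂(μ.restrict Sᶜ) := by
          rw [← lintegral_add_measure, Measure.restrict_add_restrict_compl hS]
        rw [hdecomp]
        calc (∫⁻ x, ENNReal.ofReal (‖z - x‖ ^ (-p)) ∂(μ.restrict S))
              + ∫⁻ x, ENNReal.ofReal (‖z - x‖ ^ (-p)) ∂(μ.restrict Sᶜ)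
            ≤ ENNReal.ofReal (1 + K * (p / (2 - p))) + ENNReal.ofReal M :=
              add_le_add (aux_layercake _ hνle z hK0.le hp hp2 (hball1 z))
                (houter z hz1 p hp0 (by linarith))
          _ = ENNReal.ofReal (1 + K * (p / (2 - p)) + M) := by
              rw [← ENNReal.ofReal_add
                (by positivity) hM0.le]
          _ ≤ ENNReal.ofReal (C / (2 - p)) := by
              apply ENNReal.ofReal_le_ofReal
              rw [le_div_iff₀ hq]
              have expand : (1 + K * (p / (2 - p)) + M) * (2 - p)
                  = (2 - p) + K * p + M * (2 - p) := by
                field_simp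
                try ring
              rw [expand, hCdef]
              nlinarith [mul_nonneg hα (by positivity : (0:ℝ) ≤ 2 + K + M),
                mul_nonneg hK0.le hq.le, mul_nonneg hM0.le hp.le]
      have hmeas : Measurable fun x : ℂ => ‖z - x‖ ^ (-p) :=
        ((measurable_const.sub measurable_id).norm.pow measurable_const)
      rw [integral_eq_lintegral_of_nonneg_ae
        (Filter.Eventually.of_forall fun x => Real.rpow_nonneg (norm_nonneg _) _)
        hmeas.aestronglyMeasurable]
      exact ENNReal.toReal_le_of_le_ofReal (div_nonneg hC0.le hq.le) key
  · -- circle case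
    intro p hp0 hp2 z hz
    have hz1 : 1 - ε/2 ≤ ‖z‖ := by rw [hz]; linarith
    rcases eq_or_lt_of_le hp0 with hp | hp
    · simp only [← hp, neg_zero, Real.rpow_zero, integral_const, measure_univ,
        ENNReal.toReal_one, probReal_univ, smul_eq_mul, one_mul]
      rw [le_div_iff₀ (by linarith)]
      nlinarith [hK0, hM0, mul_nonneg (by linarith : (0:ℝ) ≤ α + 2)
        (by positivity : (0:ℝ) ≤ K + M)]
    · have hq : (0:ℝ) < (α + 2) - p := by linarith
      have hq' : (2 + α) - p = (α + 2) - p := by ring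
      have key : ∫⁻ x, ENNReal.ofReal (‖z - x‖ ^ (-p)) ∂μ
          ≤ ENNReal.ofReal (C / ((α + 2) - p)) := by
        have hdecomp : ∫⁻ x, ENNReal.ofReal (‖z - x‖ ^ (-p)) ∂μ
            = (∫⁻ x, ENNReal.ofReal (‖z - x‖ ^ (-p)) ∂(μ.restrict S))
              + ∫⁻ x, ENNReal.ofReal (‖z - x‖ ^ (-p)) ∂(μ.restrict Sᶜ) := by
          rw [← lintegral_add_measure, Measure.restrict_add_restrict_compl hS]
        rw [hdecomp]
        calc (∫⁻ x, ENNReal.ofReal (‖z - x‖ ^ (-p)) ∂(μ.restrict S))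
              + ∫⁻ x, ENNReal.ofReal (‖z - x‖ ^ (-p)) ∂(μ.restrict Sᶜ)
            ≤ ENNReal.ofReal (1 + K * (p / ((2 + α) - p))) + ENNReal.ofReal M :=
              add_le_add (aux_layercake _ hνle z hK0.le hp hp2 (hball2 z hz))
                (houter z hz1 p hp0 (by linarith))
          _ = ENNReal.ofReal (1 + K * (p / ((α + 2) - p)) + M) := by
              rw [hq', ← ENNReal.ofReal_add (by positivity) hM0.le]
          _ ≤ ENNReal.ofReal (C / ((α + 2) - p)) := by
              apply ENNReal.ofReal_le_ofReal
              rw [le_div_iff₀ hq]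
              have expand : (1 + K * (p / ((α + 2) - p)) + M) * ((α + 2) - p)
                  = ((α + 2) - p) + K * p + M * ((α + 2) - p) := by
                field_simp
                try ring
              rw [expand, hCdef]
              nlinarith [mul_nonneg hK0.le hq.le, mul_nonneg hM0.le hp.le,
                mul_nonneg hα hM0.le, mul_nonneg hα hK0.le]
      have hmeas : Measurable fun x : ℂ => ‖z - x‖ ^ (-p) :=
        ((measurable_const.sub measurable_id).norm.pow measurable_const)
      rw [integral_eq_lintegral_of_nonneg_ae
        (Filter.Eventually.of_forall fun x => Real.rpow_nonneg (norm_nonneg _) _)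
        hmeas.aestronglyMeasurable]
      exact ENNReal.toReal_le_of_le_ofReal (div_nonneg hC0.le hq.le) key
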